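/- For every fixed y ∈ Y, the map x ↦ g(y, x) is globally Lipschitz on K̄. -/

import Mathlib

open Filter Topology MeasureTheory Set Metric Bornology RealInnerProductSpace
open scoped ENNReal NNReal

noncomputable section

namespace Bif

abbrev Xs (d : ℕ) : Type := EuclideanSpace ℝ (Fin d)
abbrev Ys (m : ℕ) : Type := EuclideanSpace ℝ (Fin m)
abbrev Zs (m d : ℕ) : Type := WithLp 2 (Ys m × Xs d)

variable {d m n : ℕ}

/-- The point `(y, x)` in `Y × ℝ^d` equipped with the product Euclidean (ℓ²) norm. -/
def ptYX (y : Ys m) (x : Xs d) : Zs m d := (WithLp.equiv 2 (Ys m × Xs d)).symm (y, x)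

def projY (p : Zs m d) : Ys m := ((WithLp.equiv 2 (Ys m × Xs d)) p).1

def projX (p : Zs m d) : Xs d := ((WithLp.equiv 2 (Ys m × Xs d)) p).2

/-- `f` is locally Lipschitz on `s`: every point of `s` has a relative
neighborhood on which `f` is Lipschitz. -/
def LocLipOn {α β : Type*} [PseudoEMetricSpace α] [PseudoEMetricSpace β]
    (s : Set α) (f : α → β) : Prop :=
  ∀ x ∈ s, ∃ C : NNReal, ∃ t ∈ 𝓝[s] x, LipschitzOnWith C f t

/-- The solution set `F(x) = {f_1(x), …, f_n(x)}`. -/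
def Fset (f : Fin n → Xs d → Ys m) (x : Xs d) : Set (Ys m) :=
  Set.range fun i => f i x

/-- The reduced Voronoi switching set `Σ°(x)`. -/
def Sigma0 (f : Fin n → Xs d → Ys m) (x : Xs d) : Set (Ys m) :=
  {y | ∃ i j : Fin n, f i x ≠ f j x ∧ ‖y - f i x‖ = ‖y - f j x‖ ∧
        ∀ k, ‖y - f i x‖ ≤ ‖y - f k x‖}

/-- The graph-closure switching set `Σ̃(x₀)`: the graph of `Σ̃` is the closure of
the graph of `Σ°` (over base points in `K`). -/
def SigmaTilde (K : Set (Xs d)) (f : Fin n → Xs d → Ys m) (x0 : Xs d) : Set (Ys m) :=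
  {y | (x0, y) ∈ closure {p : Xs d × Ys m | p.1 ∈ K ∧ p.2 ∈ Sigma0 f p.1}}

/-- `x₀` has a stable collapse pattern: on a relative neighborhood `U ⊆ K` of `x₀`
there is a partition (equivalence relation) of the branch indices such that two
branches agree at a point of `U` iff they lie in the same cluster. -/
def StableAt (K : Set (Xs d)) (f : Fin n → Xs d → Ys m) (x0 : Xs d) : Prop :=
  ∃ U ∈ 𝓝[K] x0, U ⊆ K ∧ ∃ R : Fin n → Fin n → Prop, Equivalence R ∧
    ∀ x ∈ U, ∀ i j : Fin n, (f i x = f j x ↔ R i j)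

/-- The unstable collapse set `𝒰 = K \ S`. -/
def Unstable (K : Set (Xs d)) (f : Fin n → Xs d → Ys m) : Set (Xs d) :=
  {x ∈ K | ¬ StableAt K f x}

/-- `P` is the priority nearest selector: `P y x = f i x` where `i` is the
smallest index minimizing `‖y - f i x‖`. -/
def IsPrioritySelector (f : Fin n → Xs d → Ys m) (P : Ys m → Xs d → Ys m) : Prop :=
  ∀ (y : Ys m) (x : Xs d), ∃ i : Fin n, P y x = f i x ∧
    (∀ j, ‖y - f i x‖ ≤ ‖y - f j x‖) ∧
    (∀ j, (∀ k, ‖y - f j x‖ ≤ ‖y - f k x‖) → i ≤ j)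

/-- On `closure K \ K`, `f` takes the value of the limit of `f` along `K` when this
limit exists, and `0` otherwise (limit-or-zero extension of the branch maps). -/
def IsLimitExtension (K : Set (Xs d)) (f : Fin n → Xs d → Ys m) : Prop :=
  ∀ i : Fin n, ∀ x ∈ closure K \ K,
    Tendsto (f i) (𝓝[K] x) (𝓝 (f i x)) ∨
    ((¬ ∃ L : Ys m, Tendsto (f i) (𝓝[K] x) (𝓝 L)) ∧ f i x = 0)

/-- `𝒟`: the points of `closure K` at which some (extended) branch fails to be
locally Lipschitz. -/
def DSet (K : Set (Xs d)) (f : Fin n → Xs d → Ys m) : Set (Xs d) :=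
  {x ∈ closure K | ∃ i : Fin n,
    ¬ ∃ C : NNReal, ∃ t ∈ 𝓝[closure K] x, LipschitzOnWith C (f i) t}

/-- The joint bad set `ℬ ⊆ Y × closure K`. -/
def BadSet (K : Set (Xs d)) (f : Fin n → Xs d → Ys m) : Set (Zs m d) :=
  {p | projX p ∈ DSet K f ∪ closure (Unstable K f) ∨ projY p ∈ SigmaTilde K f (projX p)}

/-- `ρ(y, x) = dist((y, x), ℬ)` in the product Euclidean norm. -/
def rhoB (K : Set (Xs d)) (f : Fin n → Xs d → Ys m) (y : Ys m) (x : Xs d) : ℝ :=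
  Metric.infDist (ptYX y x) (BadSet K f)

/-- `ω(y, x) = ρ(y, x) / (1 + ρ(y, x))`. -/
def omegaB (K : Set (Xs d)) (f : Fin n → Xs d → Ys m) (y : Ys m) (x : Xs d) : ℝ :=
  rhoB K f y x / (1 + rhoB K f y x)

/-- The safe tube `𝒮(R, s)`. -/
def STube (K : Set (Xs d)) (f : Fin n → Xs d → Ys m) (R s : ℝ) : Set (Ys m × Xs d) :=
  {q | q.2 ∈ closure K ∧ ‖q.1‖ ≤ R ∧ s ≤ omegaB K f q.1 q.2}

/-- The set whose supremum is the safe-set profile `H₁(R, s)`. -/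
def H1set (K : Set (Xs d)) (f : Fin n → Xs d → Ys m) (P : Ys m → Xs d → Ys m)
    (R s : ℝ) : Set ℝ :=
  {r | ∃ y x z, (y, x) ∈ STube K f R s ∧ (y, z) ∈ STube K f R s ∧ x ≠ z ∧
       r = ‖P y x - P y z‖ / ‖x - z‖}

/-- The set whose supremum is the safe-set profile `H₂(R, s)`. -/
def H2set (K : Set (Xs d)) (f : Fin n → Xs d → Ys m) (P : Ys m → Xs d → Ys m)
    (R s : ℝ) : Set ℝ :=
  {r | ∃ y x, (y, x) ∈ STube K f R s ∧ r = ‖P y x‖}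

def H1 (K : Set (Xs d)) (f : Fin n → Xs d → Ys m) (P : Ys m → Xs d → Ys m) (R s : ℝ) : ℝ :=
  sSup (H1set K f P R s)

def H2 (K : Set (Xs d)) (f : Fin n → Xs d → Ys m) (P : Ys m → Xs d → Ys m) (R s : ℝ) : ℝ :=
  sSup (H2set K f P R s)

/-- `λ_R(s) = 1 / (H₁(R, s) + H₂(R, s) + 1)`. -/
def lamB (K : Set (Xs d)) (f : Fin n → Xs d → Ys m) (P : Ys m → Xs d → Ys m)
    (R s : ℝ) : ℝ :=
  1 / (H1 K f P R s + H2 K f P R s + 1)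

/-- `Θ_R(r) = ∫₀^r λ_R(s) ds`. -/
def ThetaB (K : Set (Xs d)) (f : Fin n → Xs d → Ys m) (P : Ys m → Xs d → Ys m)
    (R r : ℝ) : ℝ :=
  ∫ s in (0:ℝ)..r, lamB K f P R s

/-- The damping factor `η(y, x)`. -/
def etaB (K : Set (Xs d)) (f : Fin n → Xs d → Ys m) (P : Ys m → Xs d → Ys m)
    (y : Ys m) (x : Xs d) : ℝ :=
  ThetaB K f P (1 + ‖y‖) (omegaB K f y x) /
    (1 + ThetaB K f P (1 + ‖y‖) (omegaB K f y x))

/-- The recurrent operator `g(y, x) = (1 − η(y, x)) y + η(y, x) P_y(x)`. -/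
def gB (K : Set (Xs d)) (f : Fin n → Xs d → Ys m) (P : Ys m → Xs d → Ys m)
    (y : Ys m) (x : Xs d) : Ys m :=
  (1 - etaB K f P y x) • y + etaB K f P y x • P y x

section Proof18

variable {d m n : ℕ}

lemma ratio_lip {a b : ℝ} (ha : 0 ≤ a) (hb : 0 ≤ b) :
    |a / (1 + a) - b / (1 + b)| ≤ |a - b| := by
  have h1 : (0:ℝ) < 1 + a := by linarith
  have h2 : (0:ℝ) < 1 + b := by linarith
  have heq : a / (1 + a) - b / (1 + b) = (a - b) / ((1 + a) * (1 + b)) := by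
    field_simp; ring
  rw [heq, abs_div, abs_of_pos (show (0:ℝ) < (1+a)*(1+b) by positivity)]
  exact div_le_self (abs_nonneg _) (by nlinarith)

lemma ratio_mono {a b : ℝ} (ha : 0 ≤ a) (hab : a ≤ b) :
    a / (1 + a) ≤ b / (1 + b) := by
  rw [div_le_div_iff₀ (by linarith) (by linarith)]
  nlinarith

lemma ratio_nonneg {a : ℝ} (ha : 0 ≤ a) : 0 ≤ a / (1 + a) := by positivity

lemma ratio_le_one {a : ℝ} (ha : 0 ≤ a) : a / (1 + a) ≤ 1 := by
  rw [div_le_one (by linarith)]; linarith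

lemma ratio_le_self {a : ℝ} (ha : 0 ≤ a) : a / (1 + a) ≤ a :=
  div_le_self ha (by linarith)

lemma fst_ptYX (y : Ys m) (x : Xs d) : (ptYX y x).fst = y := rfl
lemma snd_ptYX (y : Ys m) (x : Xs d) : (ptYX y x).snd = x := rfl
lemma projY_ptYX (y : Ys m) (x : Xs d) : projY (ptYX y x) = y := rfl
lemma projX_ptYX (y : Ys m) (x : Xs d) : projX (ptYX y x) = x := rfl

lemma dist_ptYX (y y' : Ys m) (x x' : Xs d) :
    dist (ptYX y x) (ptYX y' x') = Real.sqrt (dist y y' ^ 2 + dist x x' ^ 2) :=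
  WithLp.prod_dist_eq_of_L2 _ _

lemma dist_ptYX_same_fst (y : Ys m) (x x' : Xs d) :
    dist (ptYX y x) (ptYX y x') = dist x x' := by
  rw [dist_ptYX]
  simp [Real.sqrt_sq dist_nonneg]

lemma rho_nonneg (K : Set (Xs d)) (f : Fin n → Xs d → Ys m) (y : Ys m) (x : Xs d) :
    0 ≤ rhoB K f y x := Metric.infDist_nonneg

lemma rho_lip (K : Set (Xs d)) (f : Fin n → Xs d → Ys m) (y : Ys m) (x z : Xs d) :
    |rhoB K f y x - rhoB K f y z| ≤ dist x z := by
  have h := (lipschitz_infDist_pt (BadSet K f)).dist_le_mul (ptYX y x) (ptYX y z)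
  rw [NNReal.coe_one, one_mul, dist_ptYX_same_fst] at h
  rwa [rhoB, rhoB, ← Real.dist_eq]

lemma omega_nonneg (K : Set (Xs d)) (f : Fin n → Xs d → Ys m) (y : Ys m) (x : Xs d) :
    0 ≤ omegaB K f y x := ratio_nonneg (rho_nonneg K f y x)

lemma omega_le_one (K : Set (Xs d)) (f : Fin n → Xs d → Ys m) (y : Ys m) (x : Xs d) :
    omegaB K f y x ≤ 1 := ratio_le_one (rho_nonneg K f y x)

lemma omega_le_rho (K : Set (Xs d)) (f : Fin n → Xs d → Ys m) (y : Ys m) (x : Xs d) :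
    omegaB K f y x ≤ rhoB K f y x := ratio_le_self (rho_nonneg K f y x)

lemma omega_lip (K : Set (Xs d)) (f : Fin n → Xs d → Ys m) (y : Ys m) (x z : Xs d) :
    |omegaB K f y x - omegaB K f y z| ≤ ‖x - z‖ := by
  refine le_trans (ratio_lip (rho_nonneg K f y x) (rho_nonneg K f y z)) ?_
  rw [← Real.dist_eq, ← dist_eq_norm]
  exact rho_lip K f y x z

end Proof18
section Proof18b

variable {d m n : ℕ}

lemma tri_norm (u v w : Ys m) : ‖u - w‖ ≤ ‖u - v‖ + ‖v - w‖ := by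
  simpa [dist_eq_norm] using dist_triangle u v w

/-- Key Voronoi lemma: on a tie-free closed ball the nearest branch value is
constant, hence every branch value is quantitatively separated. -/
lemma lemV {f : Fin n → Xs d → Ys m} {P : Ys m → Xs d → Ys m}
    (hP : IsPrioritySelector f P) (z : Xs d) (y : Ys m) {ρ' : ℝ} (hρ' : 0 < ρ')
    (htf : ∀ y' ∈ Metric.closedBall y ρ', y' ∉ Sigma0 f z) :
    ∀ j k : Fin n, (∀ l, ‖y - f k z‖ ≤ ‖y - f l z‖) →
      2 * ρ' * ‖f j z - f k z‖ ≤ ‖y - f j z‖ ^ 2 - ‖y - f k z‖ ^ 2 := by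
  classical
  have hmin : ∀ y' : Ys m, ∃ i, P y' z = f i z ∧ ∀ l, ‖y' - f i z‖ ≤ ‖y' - f l z‖ := by
    intro y'; obtain ⟨i, h1, h2, _⟩ := hP y' z; exact ⟨i, h1, h2⟩
  have huniq : ∀ y' ∈ Metric.closedBall y ρ', ∀ i i' : Fin n,
      (∀ l, ‖y' - f i z‖ ≤ ‖y' - f l z‖) → (∀ l, ‖y' - f i' z‖ ≤ ‖y' - f l z‖) →
      f i z = f i' z := by
    intro y' hy' i i' hi hi'
    by_contra hne
    exact htf y' hy' ⟨i, i', hne, le_antisymm (hi i') (hi' i), hi⟩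
  have hlocc : ∀ y', y' ∈ Metric.closedBall y ρ' → ∃ ε, 0 < ε ∧ ∀ y'' ∈ Metric.closedBall y ρ',
      dist y'' y' < ε → P y'' z = P y' z := by
    intro y' hy'
    obtain ⟨i, hPi, hi⟩ := hmin y'
    by_cases hall : ∀ l, f l z = f i z
    · refine ⟨1, one_pos, fun y'' _ _ => ?_⟩
      obtain ⟨i'', hPi'', _⟩ := hmin y''
      rw [hPi'', hPi, hall i'']
    · push_neg at hall
      have hsne : (Finset.univ.filter (fun l => f l z ≠ f i z)).Nonempty := by
        obtain ⟨l, hl⟩ := hall; exact ⟨l, by simp [hl]⟩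
      set g : ℝ := (Finset.univ.filter (fun l => f l z ≠ f i z)).inf' hsne
        (fun l => ‖y' - f l z‖ - ‖y' - f i z‖) with hg
      have hgpos : 0 < g := by
        rw [hg, Finset.lt_inf'_iff]
        intro l hl
        have hlne : f l z ≠ f i z := by simpa using hl
        rcases lt_or_eq_of_le (hi l) with h | h
        · linarith
        · have hlmin : ∀ r, ‖y' - f l z‖ ≤ ‖y' - f r z‖ := fun r => h ▸ hi r
          exact ((hlne (huniq y' hy' i l hi hlmin).symm)).elim
      refine ⟨g / 2, by positivity, fun y'' hy'' hdist => ?_⟩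
      obtain ⟨i'', hPi'', hi''⟩ := hmin y''
      rw [hPi'', hPi]
      by_contra hne
      have h1 : g ≤ ‖y' - f i'' z‖ - ‖y' - f i z‖ :=
        Finset.inf'_le _ (by simp [hne])
      have e1 : ‖y'' - f i'' z‖ ≤ ‖y'' - f i z‖ := hi'' i
      have t1 : ‖y' - f i'' z‖ ≤ ‖y' - y''‖ + ‖y'' - f i'' z‖ := tri_norm _ _ _
      have t2 : ‖y'' - f i z‖ ≤ ‖y'' - y'‖ + ‖y' - f i z‖ := tri_norm _ _ _
      have hd : ‖y'' - y'‖ < g / 2 := by rwa [← dist_eq_norm]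
      have hd' : ‖y' - y''‖ < g / 2 := by rwa [norm_sub_rev]
      linarith
  have hconst : ∀ y' ∈ Metric.closedBall y ρ', P y' z = P y z := by
    by_contra hc
    push_neg at hc
    obtain ⟨yb, hyb, hbne⟩ := hc
    choose ε hεpos hεconst using hlocc
    set U : Set (Ys m) := ⋃ (y') (h : y' ∈ Metric.closedBall y ρ' ∧ P y' z = P y z),
      Metric.ball y' (ε y' h.1) with hU
    set V : Set (Ys m) := ⋃ (y') (h : y' ∈ Metric.closedBall y ρ' ∧ P y' z ≠ P y z),
      Metric.ball y' (ε y' h.1) with hV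
    have hUopen : IsOpen U := isOpen_iUnion fun y' => isOpen_iUnion fun h => Metric.isOpen_ball
    have hVopen : IsOpen V := isOpen_iUnion fun y' => isOpen_iUnion fun h => Metric.isOpen_ball
    have hcover : Metric.closedBall y ρ' ⊆ U ∪ V := by
      intro w hw
      by_cases hPw : P w z = P y z
      · exact Or.inl (Set.mem_iUnion.2 ⟨w, Set.mem_iUnion.2
          ⟨⟨hw, hPw⟩, Metric.mem_ball_self (hεpos w hw)⟩⟩)
      · exact Or.inr (Set.mem_iUnion.2 ⟨w, Set.mem_iUnion.2
          ⟨⟨hw, hPw⟩, Metric.mem_ball_self (hεpos w hw)⟩⟩)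
    have hyy : y ∈ Metric.closedBall y ρ' := Metric.mem_closedBall_self hρ'.le
    have hUne : (Metric.closedBall y ρ' ∩ U).Nonempty :=
      ⟨y, hyy, Set.mem_iUnion.2 ⟨y, Set.mem_iUnion.2 ⟨⟨hyy, rfl⟩, Metric.mem_ball_self (hεpos y hyy)⟩⟩⟩
    have hVne : (Metric.closedBall y ρ' ∩ V).Nonempty :=
      ⟨yb, hyb, Set.mem_iUnion.2 ⟨yb, Set.mem_iUnion.2 ⟨⟨hyb, hbne⟩, Metric.mem_ball_self (hεpos yb hyb)⟩⟩⟩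
    obtain ⟨w, hwball, hwU, hwV⟩ := (convex_closedBall y ρ').isPreconnected U V hUopen hVopen
      hcover hUne hVne
    obtain ⟨y1, hy1⟩ := Set.mem_iUnion.1 hwU
    obtain ⟨h1, hw1⟩ := Set.mem_iUnion.1 hy1
    obtain ⟨y2, hy2⟩ := Set.mem_iUnion.1 hwV
    obtain ⟨h2, hw2⟩ := Set.mem_iUnion.1 hy2
    have e1 : P w z = P y1 z := hεconst y1 h1.1 w hwball (Metric.mem_ball.1 hw1)
    have e2 : P w z = P y2 z := hεconst y2 h2.1 w hwball (Metric.mem_ball.1 hw2)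
    exact h2.2 (by rw [← e2, e1, h1.2])
  -- main conclusion
  intro j k hkmin
  obtain ⟨ky, hPky, hky⟩ := hmin y
  have hself : y ∈ Metric.closedBall y ρ' := Metric.mem_closedBall_self hρ'.le
  have hfkP : f k z = P y z := by rw [hPky]; exact huniq y hself k ky hkmin hky
  by_cases hjk : f j z = f k z
  · rw [hjk]; simp
  · set u := f j z with hu
    set w := f k z with hw0
    set e : Ys m := u - w with he
    have hene : e ≠ 0 := sub_ne_zero.mpr hjk
    have henorm : 0 < ‖e‖ := norm_pos_iff.mpr hene
    set t : ℝ := ρ' / ‖e‖ with ht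
    have htpos : 0 < t := div_pos hρ' henorm
    set y' := y + t • e with hy'
    have hy'mem : y' ∈ Metric.closedBall y ρ' := by
      rw [Metric.mem_closedBall, dist_eq_norm, hy', add_sub_cancel_left, norm_smul,
        Real.norm_eq_abs, abs_of_pos htpos, ht, div_mul_cancel₀ _ henorm.ne']
    obtain ⟨i', hPi', hi'⟩ := hmin y'
    have hw : f i' z = w := by rw [← hPi', hconst y' hy'mem, ← hfkP]
    have hmin' : ‖y' - w‖ ≤ ‖y' - u‖ := by have := hi' j; rwa [hw] at this
    have hsq : ‖y' - w‖ ^ 2 ≤ ‖y' - u‖ ^ 2 := by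
      have := pow_le_pow_left₀ (norm_nonneg _) hmin' 2
      exact this
    have hexp1 : y' - w = (y - w) + t • e := by rw [hy']; abel
    have hexp2 : y' - u = (y - u) + t • e := by rw [hy']; abel
    rw [hexp1, hexp2, norm_add_sq_real, norm_add_sq_real] at hsq
    have hinner : ⟪y - w, t • e⟫ - ⟪y - u, t • e⟫ = t * ‖e‖ ^ 2 := by
      rw [real_inner_smul_right, real_inner_smul_right, ← mul_sub, ← inner_sub_left]
      have h3 : (y - w) - (y - u) = e := by rw [he]; abel
      rw [h3, real_inner_self_eq_norm_sq]
    have hte : t * ‖e‖ ^ 2 = ρ' * ‖e‖ := by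
      rw [ht]; field_simp
    have : 2 * ρ' * ‖e‖ ≤ ‖y - u‖ ^ 2 - ‖y - w‖ ^ 2 := by linarith
    simpa [he] using this

end Proof18b
section Proof18c

variable {d m n : ℕ}

lemma lipOn_weaken {α β : Type*} [PseudoEMetricSpace α] [PseudoEMetricSpace β]
    {f : α → β} {s : Set α} {C C' : NNReal} (h : LipschitzOnWith C f s) (hC : C ≤ C') :
    LipschitzOnWith C' f s := fun x hx y hy =>
  le_trans (h hx hy) (mul_le_mul_left (ENNReal.coe_le_coe.2 hC) _)

/-- Local Lipschitz estimate for the selector near a point far from the bad set. -/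
lemma local_est {K : Set (Xs d)} {f : Fin n → Xs d → Ys m} {P : Ys m → Xs d → Ys m}
    (hP : IsPrioritySelector f P)
    (y₀ : Ys m) (x₀ : Xs d) (hx₀ : x₀ ∈ closure K) {δ : ℝ} (hδ : 0 < δ)
    (hρ : δ ≤ rhoB K f y₀ x₀) :
    ∃ r, 0 < r ∧ ∃ C, 0 ≤ C ∧ ∀ y ∈ Metric.ball y₀ r, ∀ x ∈ closure K ∩ Metric.ball x₀ r,
      ‖P y x‖ ≤ C ∧ ∀ z ∈ closure K ∩ Metric.ball x₀ r, ‖P y x - P y z‖ ≤ C * ‖x - z‖ := by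
  classical
  obtain ⟨i0, -, -, -⟩ := hP y₀ x₀
  haveI : Nonempty (Fin n) := ⟨i0⟩
  have notB : ∀ (y' : Ys m) (z : Xs d), ‖y' - y₀‖ < δ/2 → ‖z - x₀‖ < δ/2 →
      ptYX y' z ∉ BadSet K f := by
    intro y' z h1 h2 hmem
    have hle : δ ≤ dist (ptYX y₀ x₀) (ptYX y' z) :=
      hρ.trans (Metric.infDist_le_dist_of_mem hmem)
    rw [dist_ptYX] at hle
    have h1' : dist y₀ y' < δ/2 := by rw [dist_comm, dist_eq_norm]; exact h1
    have h2' : dist x₀ z < δ/2 := by rw [dist_comm, dist_eq_norm]; exact h2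
    have hlt : Real.sqrt (dist y₀ y' ^ 2 + dist x₀ z ^ 2) < δ := by
      rw [show δ = Real.sqrt (δ^2) from (Real.sqrt_sq hδ.le).symm]
      apply Real.sqrt_lt_sqrt (by positivity)
      nlinarith [dist_nonneg (x := y₀) (y := y'), dist_nonneg (x := x₀) (y := z)]
    linarith
  have hD : x₀ ∉ DSet K f := by
    intro hmem
    exact notB y₀ x₀ (by simpa using half_pos hδ) (by simpa using half_pos hδ)
      (Or.inl (Set.mem_union_left _ hmem))
  have hDD : ∀ i : Fin n, ∃ C : NNReal, ∃ t ∈ 𝓝[closure K] x₀, LipschitzOnWith C (f i) t := by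
    intro i
    by_contra hcon
    exact hD ⟨hx₀, i, hcon⟩
  have hloc : ∀ i : Fin n, ∃ ε, 0 < ε ∧ ∃ Ci : NNReal,
      LipschitzOnWith Ci (f i) (closure K ∩ Metric.ball x₀ ε) := by
    intro i
    obtain ⟨C, t, ht, hlip⟩ := hDD i
    obtain ⟨u, huopen, hxu, hsub⟩ := mem_nhdsWithin.1 ht
    obtain ⟨ε, hεpos, hball⟩ := Metric.isOpen_iff.1 huopen x₀ hxu
    exact ⟨ε, hεpos, C, hlip.mono (fun w hw => hsub ⟨hball hw.2, hw.1⟩)⟩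
  choose ε hεpos CL hCL using hloc
  set r₁ : ℝ := Finset.univ.inf' Finset.univ_nonempty ε with hr₁def
  have hr₁pos : 0 < r₁ := by
    rw [hr₁def, Finset.lt_inf'_iff]; exact fun i _ => hεpos i
  set L : NNReal := Finset.univ.sup CL with hLdef
  have hLip : ∀ i, LipschitzOnWith L (f i) (closure K ∩ Metric.ball x₀ r₁) := by
    intro i
    refine lipOn_weaken ((hCL i).mono ?_) (by rw [hLdef]; exact Finset.le_sup (Finset.mem_univ i))
    refine Set.inter_subset_inter_right _
      (Metric.ball_subset_ball ?_)
    rw [hr₁def]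
    exact Finset.inf'_le _ (Finset.mem_univ i)
  set ρ' : ℝ := δ/8 with hρ'def
  have hρ'pos : 0 < ρ' := by rw [hρ'def]; positivity
  set r : ℝ := min r₁ (δ/8) with hrdef
  have hrpos : 0 < r := lt_min hr₁pos (by positivity)
  have hrr₁ : r ≤ r₁ := min_le_left _ _
  have hrδ : r ≤ δ/8 := min_le_right _ _
  have htf : ∀ z ∈ K, ‖z - x₀‖ < δ/2 → ∀ y', ‖y' - y₀‖ < δ/2 → y' ∉ Sigma0 f z := by
    intro z hz hzd y' hy' hmem
    exact notB y' z hy' hzd (Or.inr (subset_closure ⟨hz, hmem⟩))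
  set Mv : ℝ := Finset.univ.sup' Finset.univ_nonempty (fun i => ‖f i x₀‖) with hMvdef
  have hMv0 : 0 ≤ Mv := by
    rw [hMvdef]
    exact le_trans (norm_nonneg (f i0 x₀))
      (Finset.le_sup' (fun i => ‖f i x₀‖) (Finset.mem_univ i0))
  set M : ℝ := ‖y₀‖ + δ + Mv + L * r₁ with hMdef
  have hM0 : 0 ≤ M := by
    rw [hMdef]; have := norm_nonneg y₀; positivity
  have hx₀mem : x₀ ∈ closure K ∩ Metric.ball x₀ r₁ := ⟨hx₀, Metric.mem_ball_self hr₁pos⟩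
  have hMbound : ∀ (i : Fin n), ∀ y ∈ Metric.ball y₀ r, ∀ w ∈ closure K ∩ Metric.ball x₀ r,
      ‖y - f i w‖ ≤ M := by
    intro i y hy w hw
    have hw₁ : w ∈ closure K ∩ Metric.ball x₀ r₁ := ⟨hw.1, Metric.ball_subset_ball hrr₁ hw.2⟩
    have hfd : dist (f i w) (f i x₀) ≤ (L : ℝ) * dist w x₀ := (hLip i).dist_le_mul w hw₁ x₀ hx₀mem
    have hwx : dist w x₀ ≤ r₁ := (Metric.mem_ball.1 hw₁.2).le
    have a4 : ‖f i w - f i x₀‖ ≤ (L : ℝ) * r₁ := by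
      rw [← dist_eq_norm]
      exact hfd.trans (mul_le_mul_of_nonneg_left hwx L.coe_nonneg)
    have a1 : ‖y - f i w‖ ≤ ‖y - y₀‖ + ‖y₀ - f i w‖ := tri_norm _ _ _
    have a2 : ‖y₀ - f i w‖ ≤ ‖y₀‖ + ‖f i w‖ := norm_sub_le _ _
    have a3 : ‖f i w‖ - ‖f i x₀‖ ≤ ‖f i w - f i x₀‖ := norm_sub_norm_le _ _
    have a5 : ‖f i x₀‖ ≤ Mv := by
      rw [hMvdef]; exact Finset.le_sup' (fun i => ‖f i x₀‖) (Finset.mem_univ i)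
    have a6 : ‖y - y₀‖ < r := by rw [← dist_eq_norm]; exact Metric.mem_ball.1 hy
    have : r ≤ δ := by linarith
    rw [hMdef]; linarith
  have key : ∀ y ∈ Metric.ball y₀ r, ∀ z ∈ closure K ∩ Metric.ball x₀ r, ∃ k,
      (∀ l, ‖y - f k z‖ ≤ ‖y - f l z‖) ∧
      ∀ j, 2 * ρ' * ‖f j z - f k z‖ ≤ ‖y - f j z‖ ^ 2 - ‖y - f k z‖ ^ 2 := by
    intro y hy z hz
    set Sk : Fin n → Set (Xs d) := fun k => {w | (w ∈ K ∧ w ∈ Metric.ball x₀ r) ∧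
      (∀ l, ‖y - f k w‖ ≤ ‖y - f l w‖) ∧
      ∀ j, 2 * ρ' * ‖f j w - f k w‖ ≤ ‖y - f j w‖ ^ 2 - ‖y - f k w‖ ^ 2} with hSkdef
    have hcb : ∀ w, w ∈ K ∧ w ∈ Metric.ball x₀ r →
        ∀ y' ∈ Metric.closedBall y ρ', y' ∉ Sigma0 f w := by
      intro w hw y' hy'
      have b1 : ‖y' - y‖ ≤ ρ' := by rw [← dist_eq_norm]; exact Metric.mem_closedBall.1 hy'
      have b2 : ‖y - y₀‖ < r := by rw [← dist_eq_norm]; exact Metric.mem_ball.1 hy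
      have b3 := tri_norm y' y y₀
      apply htf w hw.1 ?_ y' ?_
      · rw [← dist_eq_norm]
        have := Metric.mem_ball.1 hw.2
        linarith
      · linarith
    have hcov : K ∩ Metric.ball x₀ r ⊆ ⋃ k, Sk k := by
      intro w hw
      obtain ⟨k, -, hkmin, -⟩ := hP y w
      exact Set.mem_iUnion.2 ⟨k, ⟨⟨hw.1, hw.2⟩, hkmin,
        fun j => lemV hP w y hρ'pos (hcb w ⟨hw.1, hw.2⟩) j k hkmin⟩⟩
    have hzcl : z ∈ closure (K ∩ Metric.ball x₀ r) := by
      have h1 : z ∈ Metric.ball x₀ r ∩ closure K := ⟨hz.2, hz.1⟩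
      have h2 := Metric.isOpen_ball.inter_closure h1
      rwa [Set.inter_comm] at h2
    have hzcl2 : z ∈ ⋃ k, closure (Sk k) := by
      have h3 : closure (⋃ k, Sk k) ⊆ ⋃ k, closure (Sk k) :=
        closure_minimal (Set.iUnion_mono fun k => subset_closure)
          (isClosed_iUnion_of_finite fun k => isClosed_closure)
      exact h3 (closure_mono hcov hzcl)
    obtain ⟨k, hk⟩ := Set.mem_iUnion.1 hzcl2
    haveI : Filter.NeBot (𝓝[Sk k] z) := mem_closure_iff_nhdsWithin_neBot.1 hk
    have hSsub : Sk k ⊆ closure K ∩ Metric.ball x₀ r₁ := fun w hw =>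
      ⟨subset_closure hw.1.1, Metric.ball_subset_ball hrr₁ hw.1.2⟩
    have hzin : z ∈ closure K ∩ Metric.ball x₀ r₁ := ⟨hz.1, Metric.ball_subset_ball hrr₁ hz.2⟩
    have hcont : ∀ i : Fin n, Filter.Tendsto (f i) (𝓝[Sk k] z) (𝓝 (f i z)) := by
      intro i
      exact (((hLip i).continuousOn).continuousWithinAt hzin).mono hSsub
    have hnorm : ∀ i : Fin n,
        Filter.Tendsto (fun w => ‖y - f i w‖) (𝓝[Sk k] z) (𝓝 (‖y - f i z‖)) :=
      fun i => (Filter.Tendsto.const_sub y (hcont i)).norm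
    refine ⟨k, fun l => ?_, fun j => ?_⟩
    · refine le_of_tendsto_of_tendsto (hnorm k) (hnorm l) ?_
      filter_upwards [self_mem_nhdsWithin] with w hw
      exact hw.2.1 l
    · have hn2 : Filter.Tendsto (fun w => 2 * ρ' * ‖f j w - f k w‖) (𝓝[Sk k] z)
          (𝓝 (2 * ρ' * ‖f j z - f k z‖)) := (((hcont j).sub (hcont k)).norm).const_mul _
      have hn3 : Filter.Tendsto (fun w => ‖y - f j w‖ ^ 2 - ‖y - f k w‖ ^ 2) (𝓝[Sk k] z)
          (𝓝 (‖y - f j z‖ ^ 2 - ‖y - f k z‖ ^ 2)) := ((hnorm j).pow 2).sub ((hnorm k).pow 2)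
      refine le_of_tendsto_of_tendsto hn2 hn3 ?_
      filter_upwards [self_mem_nhdsWithin] with w hw
      exact hw.2.2 j
  have hC2 : (0:ℝ) ≤ 2 * (L:ℝ) * M / ρ' :=
    div_nonneg (mul_nonneg (by positivity) hM0) hρ'pos.le
  refine ⟨r, hrpos, ((L:ℝ) + 2 * L * M / ρ') + (M + ‖y₀‖ + δ), by positivity, ?_⟩
  intro y hy x hx
  obtain ⟨j, hPjx, hjmin, -⟩ := hP y x
  have hx₁ : x ∈ closure K ∩ Metric.ball x₀ r₁ := ⟨hx.1, Metric.ball_subset_ball hrr₁ hx.2⟩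
  constructor
  · have hMj := hMbound j y hy x hx
    have h1 : ‖f j x‖ - ‖y‖ ≤ ‖f j x - y‖ := norm_sub_norm_le _ _
    have h1' : ‖f j x - y‖ = ‖y - f j x‖ := norm_sub_rev _ _
    have h2 : ‖y‖ - ‖y₀‖ ≤ ‖y - y₀‖ := norm_sub_norm_le _ _
    have h3 : ‖y - y₀‖ < r := by rw [← dist_eq_norm]; exact Metric.mem_ball.1 hy
    have h4 : r ≤ δ := by linarith
    rw [hPjx]
    linarith [L.coe_nonneg]
  · intro z hz
    obtain ⟨k, hPkz, hkmin, -⟩ := hP y z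
    obtain ⟨k', hk'min, hk'⟩ := key y hy z hz
    have hz₁ : z ∈ closure K ∩ Metric.ball x₀ r₁ := ⟨hz.1, Metric.ball_subset_ball hrr₁ hz.2⟩
    have hvk : f k z = f k' z := by
      have h1 := hk' k
      have h2 : ‖y - f k z‖ = ‖y - f k' z‖ := le_antisymm (hkmin k') (hk'min k)
      rw [h2, sub_self] at h1
      have h3 : ‖f k z - f k' z‖ ≤ 0 := by nlinarith
      rw [← sub_eq_zero]
      exact norm_le_zero_iff.1 h3
    have lipj : ‖f j x - f j z‖ ≤ (L:ℝ) * ‖x - z‖ := by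
      have := (hLip j).dist_le_mul x hx₁ z hz₁
      rwa [dist_eq_norm, dist_eq_norm] at this
    have lipk : ‖f k x - f k z‖ ≤ (L:ℝ) * ‖x - z‖ := by
      have := (hLip k).dist_le_mul x hx₁ z hz₁
      rwa [dist_eq_norm, dist_eq_norm] at this
    have hb1 : ‖y - f j z‖ ≤ ‖y - f j x‖ + ‖f j x - f j z‖ := tri_norm _ _ _
    have hb2 : ‖y - f j x‖ ≤ ‖y - f k x‖ := hjmin k
    have hb3 : ‖y - f k x‖ ≤ ‖y - f k z‖ + ‖f k z - f k x‖ := tri_norm _ _ _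
    have hb4 : ‖f k z - f k x‖ = ‖f k x - f k z‖ := norm_sub_rev _ _
    have hβ : ‖y - f j z‖ - ‖y - f k' z‖ ≤ 2 * L * ‖x - z‖ := by
      rw [← hvk]; linarith
    have hβ0 : 0 ≤ ‖y - f j z‖ - ‖y - f k' z‖ := sub_nonneg.2 (hk'min j)
    have hMj := hMbound j y hy z hz
    have hMk' := hMbound k' y hy z hz
    have hsum : ‖y - f j z‖ + ‖y - f k' z‖ ≤ 2 * M := by linarith
    have hjump : 2 * ρ' * ‖f j z - f k' z‖ ≤ (2 * L * ‖x - z‖) * (2 * M) := by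
      have h1 := hk' j
      have hfac : ‖y - f j z‖ ^ 2 - ‖y - f k' z‖ ^ 2 =
          (‖y - f j z‖ - ‖y - f k' z‖) * (‖y - f j z‖ + ‖y - f k' z‖) := by ring
      have h2 : (‖y - f j z‖ - ‖y - f k' z‖) * (‖y - f j z‖ + ‖y - f k' z‖) ≤
          (2 * L * ‖x - z‖) * (2 * M) := by
        apply mul_le_mul hβ hsum (by positivity) (by positivity)
      linarith [hfac ▸ h1]
    have hjumpn : ‖f j z - f k' z‖ ≤ (2 * L * M / ρ') * ‖x - z‖ := by
      have h2ρ : (0:ℝ) < 2 * ρ' := by positivity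
      rw [← mul_le_mul_iff_right₀ h2ρ]
      calc 2 * ρ' * ‖f j z - f k' z‖ ≤ (2 * L * ‖x - z‖) * (2 * M) := hjump
        _ = 2 * ρ' * (2 * (L:ℝ) * M / ρ' * ‖x - z‖) := by field_simp
    calc ‖P y x - P y z‖ = ‖f j x - f k z‖ := by rw [hPjx, hPkz]
      _ ≤ ‖f j x - f j z‖ + ‖f j z - f k z‖ := tri_norm _ _ _
      _ = ‖f j x - f j z‖ + ‖f j z - f k' z‖ := by rw [hvk]
      _ ≤ (L:ℝ) * ‖x - z‖ + (2 * L * M / ρ') * ‖x - z‖ := add_le_add lipj hjumpn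
      _ = ((L:ℝ) + 2 * L * M / ρ') * ‖x - z‖ := by ring
      _ ≤ (((L:ℝ) + 2 * L * M / ρ') + (M + ‖y₀‖ + δ)) * ‖x - z‖ := by
        apply mul_le_mul_of_nonneg_right _ (norm_nonneg _)
        have h6 : (0:ℝ) ≤ ‖y₀‖ := norm_nonneg _
        linarith
end Proof18c
section Proof18d

variable {d m n : ℕ}

lemma cont_ptYX : Continuous fun q : Ys m × Xs d => ptYX q.1 q.2 :=
  (WithLp.prodContinuousLinearEquiv 2 ℝ (Ys m) (Xs d)).symm.continuous

lemma cont_omega (K : Set (Xs d)) (f : Fin n → Xs d → Ys m) :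
    Continuous fun q : Ys m × Xs d => omegaB K f q.1 q.2 := by
  have h1 : Continuous fun q : Ys m × Xs d => rhoB K f q.1 q.2 :=
    ((lipschitz_infDist_pt (BadSet K f)).continuous).comp cont_ptYX
  unfold omegaB
  apply h1.div (continuous_const.add h1)
  intro q
  have := rho_nonneg K f q.1 q.2
  exact ne_of_gt (by simp only [Pi.add_apply]; linarith)

lemma isCompact_STube (K : Set (Xs d)) (hK : IsBounded K) (f : Fin n → Xs d → Ys m)
    (R s : ℝ) : IsCompact (STube K f R s) := by
  rw [Metric.isCompact_iff_isClosed_bounded]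
  constructor
  · have h1 : IsClosed {q : Ys m × Xs d | q.2 ∈ closure K} :=
      isClosed_closure.preimage continuous_snd
    have h2 : IsClosed {q : Ys m × Xs d | ‖q.1‖ ≤ R} :=
      isClosed_le (continuous_norm.comp continuous_fst) continuous_const
    have h3 : IsClosed {q : Ys m × Xs d | s ≤ omegaB K f q.1 q.2} :=
      isClosed_le continuous_const (cont_omega K f)
    have : STube K f R s = {q : Ys m × Xs d | q.2 ∈ closure K} ∩
        ({q | ‖q.1‖ ≤ R} ∩ {q | s ≤ omegaB K f q.1 q.2}) := by
      ext q; simp [STube, Set.mem_setOf_eq, and_assoc]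
    rw [this]
    exact h1.inter (h2.inter h3)
  · apply Bornology.IsBounded.subset (Bornology.IsBounded.prod
      (Metric.isBounded_closedBall (x := (0 : Ys m)) (r := R)) hK.closure)
    intro q hq
    exact ⟨by simpa [Metric.mem_closedBall, dist_eq_norm] using hq.2.1, hq.1⟩

/-- Uniform bounds on the safe tube. -/
lemma tube_bounds {K : Set (Xs d)} (hK : IsBounded K) {f : Fin n → Xs d → Ys m}
    {P : Ys m → Xs d → Ys m} (hP : IsPrioritySelector f P) (R : ℝ) {s : ℝ} (hs : 0 < s) :
    ∃ C : ℝ, 0 ≤ C ∧ (∀ y x, (y, x) ∈ STube K f R s → ‖P y x‖ ≤ C) ∧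
      (∀ y x z, (y, x) ∈ STube K f R s → (y, z) ∈ STube K f R s →
        ‖P y x - P y z‖ ≤ C * ‖x - z‖) := by
  classical
  set T := STube K f R s with hT
  by_cases hTe : T = ∅
  · refine ⟨0, le_refl _, ?_, ?_⟩
    · intro y x hmem
      rw [hTe] at hmem
      exact absurd hmem (Set.notMem_empty _)
    · intro y x z hmem _
      rw [hTe] at hmem
      exact absurd hmem (Set.notMem_empty _)
  -- for every point of the tube, a local estimate
  have hloc : ∀ q : Ys m × Xs d, q ∈ T → ∃ r, 0 < r ∧ ∃ C, 0 ≤ C ∧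
      ∀ y ∈ Metric.ball q.1 r, ∀ x ∈ closure K ∩ Metric.ball q.2 r,
        ‖P y x‖ ≤ C ∧ ∀ z ∈ closure K ∩ Metric.ball q.2 r,
          ‖P y x - P y z‖ ≤ C * ‖x - z‖ := by
    intro q hq
    have hx : q.2 ∈ closure K := hq.1
    have hωρ : s ≤ rhoB K f q.1 q.2 := le_trans hq.2.2 (omega_le_rho K f q.1 q.2)
    exact local_est hP q.1 q.2 hx hs hωρ
  choose! rr hrpos CC hC0 hCb using hloc
  have hcov : T ⊆ ⋃ q ∈ T, Metric.ball q (rr q / 2) := by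
    intro q hq
    exact Set.mem_biUnion hq (Metric.mem_ball_self (by linarith [hrpos q hq]))
  obtain ⟨t, htsub, htfin, htcov⟩ := (isCompact_STube K hK f R s).elim_finite_subcover_image
    (fun q _ => Metric.isOpen_ball) hcov
  have htne : t.Nonempty := by
    obtain ⟨q, hq⟩ := Set.nonempty_iff_ne_empty.2 hTe
    obtain ⟨p, hp, -⟩ := Set.mem_iUnion₂.1 (htcov hq)
    exact ⟨p, hp⟩
  have hFne : htfin.toFinset.Nonempty := by
    rwa [Set.Finite.toFinset_nonempty]
  set ε : ℝ := htfin.toFinset.inf' hFne (fun q => rr q / 2) with hεdef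
  have hεpos : 0 < ε := by
    rw [hεdef, Finset.lt_inf'_iff]
    intro q hq
    have : q ∈ T := htsub (htfin.mem_toFinset.1 hq)
    linarith [hrpos q this]
  set Cm : ℝ := htfin.toFinset.sup' hFne (fun q => CC q) with hCmdef
  have hCm0 : 0 ≤ Cm := by
    obtain ⟨q, hq⟩ := hFne
    exact le_trans (hC0 q (htsub (htfin.mem_toFinset.1 hq)))
      (Finset.le_sup' (fun q => CC q) hq)
  -- locating a point of the tube in the cover
  have hfind : ∀ u, u ∈ T → ∃ p ∈ t, dist u p < rr p / 2 := by
    intro u hu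
    obtain ⟨p, hp, hball⟩ := Set.mem_iUnion₂.1 (htcov hu)
    exact ⟨p, hp, Metric.mem_ball.1 hball⟩
  have hCle : ∀ p ∈ t, CC p ≤ Cm := by
    intro p hp
    rw [hCmdef]
    exact Finset.le_sup' (fun q => CC q) (htfin.mem_toFinset.2 hp)
  have hPbound : ∀ y x, (y, x) ∈ T → ‖P y x‖ ≤ Cm := by
    intro y x hmem
    obtain ⟨p, hp, hd⟩ := hfind (y, x) hmem
    rw [Prod.dist_eq] at hd
    have hdy : dist y p.1 < rr p := by
      have := le_max_left (dist y p.1) (dist x p.2)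
      have hrp := hrpos p (htsub hp)
      linarith [lt_of_le_of_lt this hd]
    have hdx : dist x p.2 < rr p := by
      have := le_max_right (dist y p.1) (dist x p.2)
      have hrp := hrpos p (htsub hp)
      linarith [lt_of_le_of_lt this hd]
    have := (hCb p (htsub hp) y (Metric.mem_ball.2 hdy) x ⟨hmem.1, Metric.mem_ball.2 hdx⟩).1
    exact this.trans (hCle p hp)
  refine ⟨max Cm (2 * Cm / ε), le_trans hCm0 (le_max_left _ _),
    fun y x h => (hPbound y x h).trans (le_max_left _ _), ?_⟩
  intro y x z hmx hmz
  by_cases hxz : ‖x - z‖ < ε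
  · obtain ⟨p, hp, hd⟩ := hfind (y, x) hmx
    rw [Prod.dist_eq] at hd
    have hrp := hrpos p (htsub hp)
    have hdy : dist y p.1 < rr p := by
      have := le_max_left (dist y p.1) (dist x p.2)
      linarith [lt_of_le_of_lt this hd]
    have hdx : dist x p.2 < rr p := by
      have := le_max_right (dist y p.1) (dist x p.2)
      linarith [lt_of_le_of_lt this hd]
    have hεp : ε ≤ rr p / 2 := by
      rw [hεdef]
      exact Finset.inf'_le _ (htfin.mem_toFinset.2 hp)
    have hdz : dist z p.2 < rr p := by
      have h1 : dist z p.2 ≤ dist z x + dist x p.2 := dist_triangle _ _ _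
      have h2 : dist z x = ‖x - z‖ := by rw [dist_comm, dist_eq_norm]
      have := le_max_right (dist y p.1) (dist x p.2)
      have h3 : dist x p.2 < rr p / 2 := lt_of_le_of_lt this hd
      linarith
    have hb := (hCb p (htsub hp) y (Metric.mem_ball.2 hdy) x
      ⟨hmx.1, Metric.mem_ball.2 hdx⟩).2 z ⟨hmz.1, Metric.mem_ball.2 hdz⟩
    refine hb.trans ?_
    exact mul_le_mul_of_nonneg_right ((hCle p hp).trans (le_max_left _ _)) (norm_nonneg _)
  · push_neg at hxz
    have h1 : ‖P y x - P y z‖ ≤ 2 * Cm := by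
      have := norm_sub_le (P y x) (P y z)
      linarith [hPbound y x hmx, hPbound y z hmz]
    have h2 : 2 * Cm ≤ (2 * Cm / ε) * ‖x - z‖ := by
      have h3 : (2 * Cm / ε) * ε ≤ (2 * Cm / ε) * ‖x - z‖ :=
        mul_le_mul_of_nonneg_left hxz (by positivity)
      rw [div_mul_cancel₀] at h3
      · exact h3
      · exact hεpos.ne'
    refine (h1.trans h2).trans ?_
    exact mul_le_mul_of_nonneg_right (le_max_right _ _) (norm_nonneg _)

end Proof18d
section Proof18e

variable {d m n : ℕ} {K : Set (Xs d)} {f : Fin n → Xs d → Ys m} {P : Ys m → Xs d → Ys m}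

lemma H1_nonneg (K : Set (Xs d)) (f : Fin n → Xs d → Ys m) (P : Ys m → Xs d → Ys m)
    (R s : ℝ) : 0 ≤ H1 K f P R s := by
  apply Real.sSup_nonneg
  rintro r ⟨y, x, z, -, -, -, rfl⟩
  positivity

lemma H2_nonneg (K : Set (Xs d)) (f : Fin n → Xs d → Ys m) (P : Ys m → Xs d → Ys m)
    (R s : ℝ) : 0 ≤ H2 K f P R s := by
  apply Real.sSup_nonneg
  rintro r ⟨y, x, -, rfl⟩
  positivity

lemma H1set_bdd (hK : IsBounded K) (hP : IsPrioritySelector f P) (R : ℝ) {s : ℝ}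
    (hs : 0 < s) : BddAbove (H1set K f P R s) := by
  obtain ⟨C, hC0, hCP, hCpair⟩ := tube_bounds hK hP R hs
  refine ⟨C, ?_⟩
  rintro r ⟨y, x, z, hx, hz, hxz, rfl⟩
  have hn : 0 < ‖x - z‖ := by rw [norm_pos_iff, sub_ne_zero]; exact hxz
  rw [div_le_iff₀ hn]
  exact hCpair y x z hx hz

lemma H2set_bdd (hK : IsBounded K) (hP : IsPrioritySelector f P) (R : ℝ) {s : ℝ}
    (hs : 0 < s) : BddAbove (H2set K f P R s) := by
  obtain ⟨C, hC0, hCP, hCpair⟩ := tube_bounds hK hP R hs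
  refine ⟨C, ?_⟩
  rintro r ⟨y, x, hx, rfl⟩
  exact hCP y x hx

lemma STube_anti (K : Set (Xs d)) (f : Fin n → Xs d → Ys m) (R : ℝ) {s s' : ℝ}
    (hss : s ≤ s') : STube K f R s' ⊆ STube K f R s :=
  fun q hq => ⟨hq.1, hq.2.1, le_trans hss hq.2.2⟩

lemma H1_anti (hK : IsBounded K) (hP : IsPrioritySelector f P) (R : ℝ) {s s' : ℝ}
    (hs : 0 < s) (hss : s ≤ s') : H1 K f P R s' ≤ H1 K f P R s := by
  by_cases hne : (H1set K f P R s').Nonempty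
  · apply csSup_le_csSup (H1set_bdd hK hP R hs) hne
    rintro r ⟨y, x, z, hx, hz, hxz, rfl⟩
    exact ⟨y, x, z, STube_anti K f R hss hx, STube_anti K f R hss hz, hxz, rfl⟩
  · rw [Set.not_nonempty_iff_eq_empty] at hne
    rw [H1, hne, Real.sSup_empty]
    exact H1_nonneg K f P R s

lemma H2_anti (hK : IsBounded K) (hP : IsPrioritySelector f P) (R : ℝ) {s s' : ℝ}
    (hs : 0 < s) (hss : s ≤ s') : H2 K f P R s' ≤ H2 K f P R s := by
  by_cases hne : (H2set K f P R s').Nonempty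
  · apply csSup_le_csSup (H2set_bdd hK hP R hs) hne
    rintro r ⟨y, x, hx, rfl⟩
    exact ⟨y, x, STube_anti K f R hss hx, rfl⟩
  · rw [Set.not_nonempty_iff_eq_empty] at hne
    rw [H2, hne, Real.sSup_empty]
    exact H2_nonneg K f P R s

lemma lam_den_pos (K : Set (Xs d)) (f : Fin n → Xs d → Ys m) (P : Ys m → Xs d → Ys m)
    (R s : ℝ) : 0 < H1 K f P R s + H2 K f P R s + 1 := by
  linarith [H1_nonneg K f P R s, H2_nonneg K f P R s]

lemma lam_pos (K : Set (Xs d)) (f : Fin n → Xs d → Ys m) (P : Ys m → Xs d → Ys m)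
    (R s : ℝ) : 0 < lamB K f P R s :=
  one_div_pos.2 (lam_den_pos K f P R s)

lemma lam_le_one (K : Set (Xs d)) (f : Fin n → Xs d → Ys m) (P : Ys m → Xs d → Ys m)
    (R s : ℝ) : lamB K f P R s ≤ 1 := by
  rw [lamB, div_le_one (lam_den_pos K f P R s)]
  linarith [H1_nonneg K f P R s, H2_nonneg K f P R s]

lemma lam_mul_den (K : Set (Xs d)) (f : Fin n → Xs d → Ys m) (P : Ys m → Xs d → Ys m)
    (R s : ℝ) :
    lamB K f P R s * (H1 K f P R s + H2 K f P R s + 1) = 1 := by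
  rw [lamB, one_div, inv_mul_cancel₀ (lam_den_pos K f P R s).ne']

lemma lam_mono (hK : IsBounded K) (hP : IsPrioritySelector f P) (R : ℝ) {s s' : ℝ}
    (hs : 0 < s) (hss : s ≤ s') : lamB K f P R s ≤ lamB K f P R s' := by
  rw [lamB, lamB]
  apply one_div_le_one_div_of_le (lam_den_pos K f P R s')
  linarith [H1_anti hK hP R hs hss, H2_anti hK hP R hs hss]

lemma lam_int (hK : IsBounded K) (hP : IsPrioritySelector f P) (R : ℝ) :
    MeasureTheory.IntegrableOn (lamB K f P R) (Set.Ioc (0:ℝ) 1) := by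
  classical
  set g : ℝ → ℝ := fun t => if t ≤ 0 then 0 else lamB K f P R (min t 1) with hg
  have hmono : Monotone g := by
    intro u v huv
    by_cases hu : u ≤ 0
    · by_cases hv : v ≤ 0
      · simp [hg, hu, hv]
      · simp only [hg, if_pos hu, if_neg hv]
        exact (lam_pos K f P R _).le
    · have hv : ¬ v ≤ 0 := fun h => hu (huv.trans h)
      simp only [hg, if_neg hu, if_neg hv]
      exact lam_mono hK hP R (lt_min (not_le.1 hu) one_pos) (min_le_min huv (le_refl 1))
  have hmeas : Measurable g := hmono.measurable
  have hInt : MeasureTheory.IntegrableOn g (Set.Ioc (0:ℝ) 1) := by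
    apply MeasureTheory.Measure.integrableOn_of_bounded (M := 1)
      (measure_Ioc_lt_top).ne hmeas.aestronglyMeasurable
    filter_upwards with t
    rcases le_or_gt t 0 with h | h
    · simp [hg, h]
    · simp only [hg, if_neg (not_le.2 h), Real.norm_eq_abs,
        abs_of_pos (lam_pos K f P R _)]
      exact lam_le_one K f P R _
  apply hInt.congr_fun _ measurableSet_Ioc
  intro t ht
  simp [hg, not_le.2 ht.1, min_eq_left ht.2]

lemma lam_intervalInt (hK : IsBounded K) (hP : IsPrioritySelector f P) (R : ℝ)
    {a b : ℝ} (ha : 0 ≤ a) (hab : a ≤ b) (hb : b ≤ 1) :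
    IntervalIntegrable (lamB K f P R) MeasureTheory.volume a b := by
  rw [intervalIntegrable_iff_integrableOn_Ioc_of_le hab]
  exact (lam_int hK hP R).mono_set (Set.Ioc_subset_Ioc ha hb)

lemma Theta_sub (hK : IsBounded K) (hP : IsPrioritySelector f P) (R : ℝ)
    {a b : ℝ} (ha : 0 ≤ a) (hab : a ≤ b) (hb : b ≤ 1) :
    ThetaB K f P R b - ThetaB K f P R a = ∫ t in a..b, lamB K f P R t := by
  rw [ThetaB, ThetaB]
  exact intervalIntegral.integral_interval_sub_left
    (lam_intervalInt hK hP R (le_refl 0) (ha.trans hab) hb)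
    (lam_intervalInt hK hP R (le_refl 0) ha (hab.trans hb))

lemma Theta_sub_nonneg (hK : IsBounded K) (hP : IsPrioritySelector f P) (R : ℝ)
    {a b : ℝ} (ha : 0 ≤ a) (hab : a ≤ b) (hb : b ≤ 1) :
    0 ≤ ThetaB K f P R b - ThetaB K f P R a := by
  rw [Theta_sub hK hP R ha hab hb, intervalIntegral.integral_of_le hab]
  exact MeasureTheory.setIntegral_nonneg measurableSet_Ioc
    (fun t _ => (lam_pos K f P R t).le)

lemma Theta_sub_le (hK : IsBounded K) (hP : IsPrioritySelector f P) (R : ℝ)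
    {a b : ℝ} (ha : 0 ≤ a) (hab : a ≤ b) (hb : b ≤ 1) (hbpos : 0 < b) :
    ThetaB K f P R b - ThetaB K f P R a ≤ lamB K f P R b * (b - a) := by
  rw [Theta_sub hK hP R ha hab hb, intervalIntegral.integral_of_le hab]
  have h1 : ∫ t in Set.Ioc a b, lamB K f P R t ≤ ∫ _ in Set.Ioc a b, lamB K f P R b := by
    apply MeasureTheory.setIntegral_mono_on
      ((lam_int hK hP R).mono_set (Set.Ioc_subset_Ioc ha hb))
      (MeasureTheory.integrableOn_const measure_Ioc_lt_top.ne)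
      measurableSet_Ioc
    intro t ht
    exact lam_mono hK hP R (lt_of_le_of_lt ha ht.1) ht.2
  rw [MeasureTheory.setIntegral_const, Real.volume_real_Ioc_of_le hab, smul_eq_mul] at h1
  linarith [h1]

lemma Theta_zero (K : Set (Xs d)) (f : Fin n → Xs d → Ys m) (P : Ys m → Xs d → Ys m)
    (R : ℝ) : ThetaB K f P R 0 = 0 :=
  intervalIntegral.integral_same

lemma Theta_nonneg (hK : IsBounded K) (hP : IsPrioritySelector f P) (R : ℝ)
    {a : ℝ} (ha : 0 ≤ a) (ha1 : a ≤ 1) : 0 ≤ ThetaB K f P R a := by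
  have := Theta_sub_nonneg hK hP R (le_refl 0) ha ha1
  rw [Theta_zero] at this
  linarith

end Proof18e
section Proof18f

variable {d m n : ℕ} {K : Set (Xs d)} {f : Fin n → Xs d → Ys m} {P : Ys m → Xs d → Ys m}

lemma main_est (hK : IsBounded K) (hP : IsPrioritySelector f P) (y : Ys m) {x z : Xs d}
    (hx : x ∈ closure K) (hz : z ∈ closure K)
    (hab : omegaB K f y x ≤ omegaB K f y z) :
    ‖gB K f P y x - gB K f P y z‖ ≤ (3 + ‖y‖) * ‖x - z‖ := by
  set R : ℝ := 1 + ‖y‖ with hR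
  have hR1 : (1:ℝ) ≤ R := by rw [hR]; linarith [norm_nonneg y]
  have hyR : ‖y‖ ≤ R := by rw [hR]; linarith
  have ha0 : 0 ≤ omegaB K f y x := omega_nonneg K f y x
  have hb0 : 0 ≤ omegaB K f y z := omega_nonneg K f y z
  have ha1 : omegaB K f y x ≤ 1 := omega_le_one K f y x
  have hb1 : omegaB K f y z ≤ 1 := omega_le_one K f y z
  have hba : omegaB K f y z - omegaB K f y x ≤ ‖x - z‖ := by
    have h := omega_lip K f y x z
    have h2 := neg_abs_le (omegaB K f y x - omegaB K f y z)
    linarith [h2.trans (le_abs_self _)]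
  have hxz0 : (0:ℝ) ≤ ‖x - z‖ := norm_nonneg _
  have hAB : 0 ≤ ThetaB K f P R (omegaB K f y z) - ThetaB K f P R (omegaB K f y x) :=
    Theta_sub_nonneg hK hP R ha0 hab hb1
  have hA0 : 0 ≤ ThetaB K f P R (omegaB K f y x) := Theta_nonneg hK hP R ha0 ha1
  have hB0 : 0 ≤ ThetaB K f P R (omegaB K f y z) := Theta_nonneg hK hP R hb0 hb1
  have hetax : etaB K f P y x =
      ThetaB K f P R (omegaB K f y x) / (1 + ThetaB K f P R (omegaB K f y x)) := by
    rw [etaB, ← hR]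
  have hetaz : etaB K f P y z =
      ThetaB K f P R (omegaB K f y z) / (1 + ThetaB K f P R (omegaB K f y z)) := by
    rw [etaB, ← hR]
  by_cases hb : omegaB K f y z = 0
  · have ha : omegaB K f y x = 0 := le_antisymm (hb ▸ hab) ha0
    have hgx : gB K f P y x = y := by
      rw [gB, hetax, ha, Theta_zero]
      norm_num
    have hgz : gB K f P y z = y := by
      rw [gB, hetaz, hb, Theta_zero]
      norm_num
    rw [hgx, hgz, sub_self, norm_zero]
    positivity
  · have hbpos : 0 < omegaB K f y z := lt_of_le_of_ne hb0 (Ne.symm hb)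
    have hmzb : (y, z) ∈ STube K f R (omegaB K f y z) := ⟨hz, hyR, le_refl _⟩
    have hBA : ThetaB K f P R (omegaB K f y z) - ThetaB K f P R (omegaB K f y x) ≤
        lamB K f P R (omegaB K f y z) * (omegaB K f y z - omegaB K f y x) :=
      Theta_sub_le hK hP R ha0 hab hb1 hbpos
    have hlampos := lam_pos K f P R (omegaB K f y z)
    have hlamone := lam_le_one K f P R (omegaB K f y z)
    have hlamden := lam_mul_den K f P R (omegaB K f y z)
    have hH1nn := H1_nonneg K f P R (omegaB K f y z)
    have hH2nn := H2_nonneg K f P R (omegaB K f y z)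
    have hH2 : ‖P y z‖ ≤ H2 K f P R (omegaB K f y z) :=
      le_csSup (H2set_bdd hK hP R hbpos) ⟨y, z, hmzb, rfl⟩
    have hPzy : ‖P y z - y‖ ≤ H2 K f P R (omegaB K f y z) + R := by
      have := norm_sub_le (P y z) y
      linarith
    -- the crucial bound on the first term coefficient
    have hcoef : lamB K f P R (omegaB K f y z) * (H2 K f P R (omegaB K f y z) + R) ≤ 1 + R := by
      nlinarith
    have hetad : |etaB K f P y x - etaB K f P y z| ≤
        ThetaB K f P R (omegaB K f y z) - ThetaB K f P R (omegaB K f y x) := by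
      rw [hetax, hetaz]
      have := ratio_lip hA0 hB0
      rw [abs_sub_comm (ThetaB K f P R (omegaB K f y x)) (ThetaB K f P R (omegaB K f y z))] at *
      calc |ThetaB K f P R (omegaB K f y x) / (1 + ThetaB K f P R (omegaB K f y x)) -
            ThetaB K f P R (omegaB K f y z) / (1 + ThetaB K f P R (omegaB K f y z))| ≤
          |ThetaB K f P R (omegaB K f y x) - ThetaB K f P R (omegaB K f y z)| :=
            ratio_lip hA0 hB0
        _ = |ThetaB K f P R (omegaB K f y z) - ThetaB K f P R (omegaB K f y x)| :=
            abs_sub_comm _ _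
        _ = ThetaB K f P R (omegaB K f y z) - ThetaB K f P R (omegaB K f y x) :=
            abs_of_nonneg hAB
    have hT1 : |etaB K f P y x - etaB K f P y z| * ‖P y z - y‖ ≤ (1 + R) * ‖x - z‖ := by
      have h1 : |etaB K f P y x - etaB K f P y z| ≤
          lamB K f P R (omegaB K f y z) * ‖x - z‖ := by
        have h2 : lamB K f P R (omegaB K f y z) * (omegaB K f y z - omegaB K f y x) ≤
            lamB K f P R (omegaB K f y z) * ‖x - z‖ :=
          mul_le_mul_of_nonneg_left hba hlampos.le
        linarith [hetad.trans (hBA.trans h2)]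
      calc |etaB K f P y x - etaB K f P y z| * ‖P y z - y‖ ≤
          (lamB K f P R (omegaB K f y z) * ‖x - z‖) *
            (H2 K f P R (omegaB K f y z) + R) := by
            apply mul_le_mul h1 hPzy (norm_nonneg _) (by positivity)
        _ = (lamB K f P R (omegaB K f y z) * (H2 K f P R (omegaB K f y z) + R)) * ‖x - z‖ := by
            ring
        _ ≤ (1 + R) * ‖x - z‖ := mul_le_mul_of_nonneg_right hcoef hxz0
    by_cases ha : omegaB K f y x = 0
    · have hgx : gB K f P y x = y := by
        rw [gB, hetax, ha, Theta_zero]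
        norm_num
      have hdec : y - gB K f P y z = etaB K f P y z • (y - P y z) := by
        rw [gB]
        rw [sub_smul, one_smul, smul_sub]
        abel
      have hA0' : ThetaB K f P R (omegaB K f y x) = 0 := by rw [ha, Theta_zero]
      have hetax0 : etaB K f P y x = 0 := by rw [hetax, hA0', zero_div]
      rw [hgx, hdec, norm_smul, Real.norm_eq_abs]
      have h3 : ‖y - P y z‖ = ‖P y z - y‖ := norm_sub_rev _ _
      have h4 : |etaB K f P y z| = |etaB K f P y x - etaB K f P y z| := by
        rw [hetax0, zero_sub, abs_neg]
      rw [h3, h4]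
      refine hT1.trans ?_
      apply mul_le_mul_of_nonneg_right _ hxz0
      linarith
    · have hapos : 0 < omegaB K f y x := lt_of_le_of_ne ha0 (Ne.symm ha)
      have hmxa : (y, x) ∈ STube K f R (omegaB K f y x) := ⟨hx, hyR, le_refl _⟩
      have hmza : (y, z) ∈ STube K f R (omegaB K f y x) := ⟨hz, hyR, hab⟩
      by_cases hxz : x = z
      · rw [hxz, sub_self, norm_zero]
        positivity
      · have hxzn : 0 < ‖x - z‖ := by rw [norm_pos_iff, sub_ne_zero]; exact hxz
        have hH1a : ‖P y x - P y z‖ / ‖x - z‖ ≤ H1 K f P R (omegaB K f y x) :=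
          le_csSup (H1set_bdd hK hP R hapos) ⟨y, x, z, hmxa, hmza, hxz, rfl⟩
        have hPP : ‖P y x - P y z‖ ≤ H1 K f P R (omegaB K f y x) * ‖x - z‖ := by
          rw [div_le_iff₀ hxzn] at hH1a
          linarith
        have hetaxA : |etaB K f P y x| ≤ ThetaB K f P R (omegaB K f y x) := by
          rw [hetax, abs_of_nonneg (ratio_nonneg hA0)]
          exact ratio_le_self hA0
        have hAle : ThetaB K f P R (omegaB K f y x) ≤
            lamB K f P R (omegaB K f y x) * omegaB K f y x := by
          have h := Theta_sub_le hK hP R (le_refl 0) ha0 ha1 hapos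
          rw [Theta_zero] at h
          linarith
        have hlamposa := lam_pos K f P R (omegaB K f y x)
        have hlamdena := lam_mul_den K f P R (omegaB K f y x)
        have hH1nna := H1_nonneg K f P R (omegaB K f y x)
        have hH2nna := H2_nonneg K f P R (omegaB K f y x)
        have hT2 : |etaB K f P y x| * ‖P y x - P y z‖ ≤ ‖x - z‖ := by
          have h5 : |etaB K f P y x| * ‖P y x - P y z‖ ≤
              (lamB K f P R (omegaB K f y x) * omegaB K f y x) *
                (H1 K f P R (omegaB K f y x) * ‖x - z‖) := by
            apply mul_le_mul (hetaxA.trans hAle) hPP (norm_nonneg _)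
              (mul_nonneg hlamposa.le ha0)
          have p1 : lamB K f P R (omegaB K f y x) * H1 K f P R (omegaB K f y x) ≤ 1 := by
            nlinarith [mul_nonneg hlamposa.le hH2nna, hlamposa.le]
          have h6 : (lamB K f P R (omegaB K f y x) * omegaB K f y x) *
              (H1 K f P R (omegaB K f y x) * ‖x - z‖) ≤ ‖x - z‖ := by
            calc (lamB K f P R (omegaB K f y x) * omegaB K f y x) *
                (H1 K f P R (omegaB K f y x) * ‖x - z‖) =
                (lamB K f P R (omegaB K f y x) * H1 K f P R (omegaB K f y x)) *
                  (omegaB K f y x * ‖x - z‖) := by ring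
              _ ≤ 1 * (omegaB K f y x * ‖x - z‖) :=
                  mul_le_mul_of_nonneg_right p1 (mul_nonneg ha0 hxz0)
              _ = omegaB K f y x * ‖x - z‖ := one_mul _
              _ ≤ 1 * ‖x - z‖ := mul_le_mul_of_nonneg_right ha1 hxz0
              _ = ‖x - z‖ := one_mul _
          linarith
        have hdec : gB K f P y x - gB K f P y z =
            (etaB K f P y x - etaB K f P y z) • (P y z - y) +
              etaB K f P y x • (P y x - P y z) := by
          rw [gB, gB]
          module
        rw [hdec]
        calc ‖(etaB K f P y x - etaB K f P y z) • (P y z - y) +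
              etaB K f P y x • (P y x - P y z)‖ ≤
            ‖(etaB K f P y x - etaB K f P y z) • (P y z - y)‖ +
              ‖etaB K f P y x • (P y x - P y z)‖ := norm_add_le _ _
          _ = |etaB K f P y x - etaB K f P y z| * ‖P y z - y‖ +
              |etaB K f P y x| * ‖P y x - P y z‖ := by
              rw [norm_smul, norm_smul, Real.norm_eq_abs, Real.norm_eq_abs]
          _ ≤ (1 + R) * ‖x - z‖ + ‖x - z‖ := add_le_add hT1 hT2
          _ = (3 + ‖y‖) * ‖x - z‖ := by
              rw [hR]
              ring

end Proof18f
/-- For every fixed `y`, the map `x ↦ g(y, x)` is globally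
Lipschitz on `closure K`. -/
theorem statement18 {d m n : ℕ}
    (K : Set (Xs d)) (hK : IsBounded K)
    (f : Fin n → Xs d → Ys m) (hf : ∀ i, LocLipOn K (f i))
    (hext : IsLimitExtension K f)
    (P : Ys m → Xs d → Ys m) (hP : IsPrioritySelector f P) :
    ∀ y : Ys m, ∃ C : NNReal,
      LipschitzOnWith C (fun x => gB K f P y x) (closure K) := by
  intro y
  refine ⟨(3 + ‖y‖).toNNReal, ?_⟩
  apply LipschitzOnWith.of_dist_le_mul
  intro x hx z hz
  rw [dist_eq_norm, dist_eq_norm, Real.coe_toNNReal _ (by positivity)]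
  rcases le_total (omegaB K f y x) (omegaB K f y z) with h | h
  · exact main_est hK hP y hx hz h
  · have h2 := main_est hK hP y hz hx h
    rw [norm_sub_rev (gB K f P y z), norm_sub_rev z x] at h2
    exact h2

end Bif
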